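/- Let γ > 0, a ∈ ℝ, and ψ ∈ L²(ℝ, ℂ). Then for every z ∈ ℂ, 𝔅_γ[x ↦ ψ(x − a)](z) = 𝔅_γψ(z − a/√2); that is, the RBF Segal–Bargmann transform intertwines translation by a on L²(ℝ) with translation by a/√2 on the RBF space. -/

import Mathlib

open MeasureTheory Complex

/-- The RBF Segal–Bargmann transform
`𝔅_γψ(z) = (2/(πγ²))^{1/4} ∫_ℝ exp(−(x − √2 z)²/γ²) ψ(x) dx`. -/
noncomputable def rbfSB (γ : ℝ) (ψ : ℝ → ℂ) (z : ℂ) : ℂ :=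
  (((2 / (Real.pi * γ ^ 2)) ^ ((1 : ℝ) / 4) : ℝ) : ℂ) *
    ∫ x : ℝ, Complex.exp (-((x : ℂ) - (Real.sqrt 2 : ℂ) * z) ^ 2 / (γ : ℂ) ^ 2) * ψ x

theorem rbfSB_translation (γ : ℝ) (hγ : 0 < γ) (a : ℝ) (ψ : ℝ → ℂ)
    (hψ : MemLp ψ 2 volume) :
    ∀ z : ℂ,
      rbfSB γ (fun x => ψ (x - a)) z = rbfSB γ ψ (z - (a : ℂ) / (Real.sqrt 2 : ℂ)) := by
  intro z
  have hs : (Real.sqrt 2 : ℂ) ≠ 0 := by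
    simpa using Complex.ofReal_ne_zero.mpr (by positivity : Real.sqrt 2 ≠ 0)
  unfold rbfSB
  congr 1
  have key := MeasureTheory.integral_sub_right_eq_self (μ := volume)
    (fun x : ℝ => Complex.exp (-(((x : ℝ) : ℂ) + (a : ℂ) -
      (Real.sqrt 2 : ℂ) * z) ^ 2 / (γ : ℂ) ^ 2) * ψ x) a
  calc (∫ x : ℝ, Complex.exp (-((x : ℂ) - (Real.sqrt 2 : ℂ) * z) ^ 2 / (γ : ℂ) ^ 2)
          * ψ (x - a))
      = ∫ x : ℝ, Complex.exp (-((((x - a : ℝ)) : ℂ) + (a : ℂ) -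
          (Real.sqrt 2 : ℂ) * z) ^ 2 / (γ : ℂ) ^ 2) * ψ (x - a) := by
        congr 1; funext x; push_cast; ring_nf
    _ = ∫ x : ℝ, Complex.exp (-(((x : ℝ) : ℂ) + (a : ℂ) -
          (Real.sqrt 2 : ℂ) * z) ^ 2 / (γ : ℂ) ^ 2) * ψ x := key
    _ = ∫ x : ℝ, Complex.exp (-((x : ℂ) - (Real.sqrt 2 : ℂ) *
          (z - (a : ℂ) / (Real.sqrt 2 : ℂ))) ^ 2 / (γ : ℂ) ^ 2) * ψ x := by
        congr 1; funext x
        congr 2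
        field_simp
        ring
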